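/- There exists a finite set X of 55 points in the plane such that for every packing of unit disks (closed unit disks with pairwise disjoint interiors), at least one point of X is not contained in any disk of the packing. -/

import Mathlib

noncomputable section

abbrev E2 := EuclideanSpace ℝ (Fin 2)

def pt (x y : ℝ) : E2 := !₂[x, y]

namespace C55

set_option maxHeartbeats 1000000



lemma rigidity (p0 p1 a0 a1 b0 b1 q0 q1 : ℝ)
    (hab : 4 ≤ (a0-b0)^2+(a1-b1)^2)
    (haq : 4 ≤ (a0-q0)^2+(a1-q1)^2)
    (hbq : 4 ≤ (b0-q0)^2+(b1-q1)^2)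
    (hpa : (p0-a0)^2+(p1-a1)^2 ≤ 4/3)
    (hpb : (p0-b0)^2+(p1-b1)^2 < 4/3)
    (hpq : (p0-q0)^2+(p1-q1)^2 < 4/3) : False := by
  nlinarith [sq_nonneg (a0+b0+q0-3*p0), sq_nonneg (a1+b1+q1-3*p1)]

lemma chord_scalar (e2 s1 s2 d1 d2 ip : ℝ) (he : 4 ≤ e2)
    (h1 : e2 < 2*s1) (h2 : e2 < 2*s2)
    (hd1 : d1^2 + s1^2 = (4/3)*e2) (hd2 : d2^2 + s2^2 = (4/3)*e2)
    (hlag : ip * e2 = s1*s2 + d1*d2) : 2/3 < ip := by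
  have he2 : (0:ℝ) < e2 := by linarith
  have hs1 : 2 < s1 := by nlinarith
  have hs2 : 2 < s2 := by nlinarith
  have hA : e2 < s1 * s2 := by nlinarith [mul_pos (show (0:ℝ) < s1 - e2/2 by linarith) (show (0:ℝ) < s2 - e2/2 by linarith), mul_nonneg (show (0:ℝ) ≤ e2 - 4 by linarith) he2.le]
  have hQ : 0 < s1^2 + s2^2 - s1*s2 - e2 := by nlinarith [sq_nonneg (s1-s2)]
  have hG : d1^2 * d2^2 < (s1*s2 - (2/3)*e2)^2 := by nlinarith [mul_pos he2 hQ]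
  have hA' : 0 < s1*s2 - (2/3)*e2 := by linarith
  have h6 : -(s1*s2 - (2/3)*e2) < d1*d2 := by
    nlinarith [hG, hA', sq_nonneg (d1*d2 + (s1*s2 - (2/3)*e2))]
  have h7 : (2/3)*e2 < ip * e2 := by rw [hlag]; linarith
  exact lt_of_mul_lt_mul_right h7 he2.le

lemma chord (z0 z1 w0 w1 x0 x1 y0 y1 : ℝ)
    (hx : (x0-z0)^2 + (x1-z1)^2 = 4/3)
    (hy : (y0-z0)^2 + (y1-z1)^2 = 4/3)
    (he : 4 ≤ (w0-z0)^2 + (w1-z1)^2)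
    (hxw : (x0-w0)^2 + (x1-w1)^2 < 4/3)
    (hyw : (y0-w0)^2 + (y1-w1)^2 < 4/3) :
    (x0-y0)^2 + (x1-y1)^2 < 4/3 := by
  have id1 : (x0-w0)^2 + (x1-w1)^2 = ((x0-z0)^2+(x1-z1)^2) + ((w0-z0)^2+(w1-z1)^2)
      - 2*((x0-z0)*(w0-z0) + (x1-z1)*(w1-z1)) := by ring
  have id2 : (y0-w0)^2 + (y1-w1)^2 = ((y0-z0)^2+(y1-z1)^2) + ((w0-z0)^2+(w1-z1)^2)
      - 2*((y0-z0)*(w0-z0) + (y1-z1)*(w1-z1)) := by ring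
  have h1 : (w0-z0)^2 + (w1-z1)^2 < 2*((x0-z0)*(w0-z0) + (x1-z1)*(w1-z1)) := by
    rw [id1, hx] at hxw; linarith
  have h2 : (w0-z0)^2 + (w1-z1)^2 < 2*((y0-z0)*(w0-z0) + (y1-z1)*(w1-z1)) := by
    rw [id2, hy] at hyw; linarith
  have hd1 : ((x0-z0)*(w1-z1) - (x1-z1)*(w0-z0))^2 + ((x0-z0)*(w0-z0) + (x1-z1)*(w1-z1))^2
      = (4/3)*((w0-z0)^2 + (w1-z1)^2) := by
    have : ((x0-z0)*(w1-z1) - (x1-z1)*(w0-z0))^2 + ((x0-z0)*(w0-z0) + (x1-z1)*(w1-z1))^2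
        = ((x0-z0)^2 + (x1-z1)^2) * ((w0-z0)^2 + (w1-z1)^2) := by ring
    rw [this, hx]
  have hd2 : ((y0-z0)*(w1-z1) - (y1-z1)*(w0-z0))^2 + ((y0-z0)*(w0-z0) + (y1-z1)*(w1-z1))^2
      = (4/3)*((w0-z0)^2 + (w1-z1)^2) := by
    have : ((y0-z0)*(w1-z1) - (y1-z1)*(w0-z0))^2 + ((y0-z0)*(w0-z0) + (y1-z1)*(w1-z1))^2
        = ((y0-z0)^2 + (y1-z1)^2) * ((w0-z0)^2 + (w1-z1)^2) := by ring
    rw [this, hy]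
  have hlag : ((x0-z0)*(y0-z0) + (x1-z1)*(y1-z1)) * ((w0-z0)^2 + (w1-z1)^2)
      = ((x0-z0)*(w0-z0) + (x1-z1)*(w1-z1)) * ((y0-z0)*(w0-z0) + (y1-z1)*(w1-z1))
        + ((x0-z0)*(w1-z1) - (x1-z1)*(w0-z0)) * ((y0-z0)*(w1-z1) - (y1-z1)*(w0-z0)) := by
    ring
  have hip := chord_scalar ((w0-z0)^2 + (w1-z1)^2) _ _ _ _
    ((x0-z0)*(y0-z0) + (x1-z1)*(y1-z1)) he h1 h2 hd1 hd2 hlag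
  have idf : (x0-y0)^2 + (x1-y1)^2 = ((x0-z0)^2+(x1-z1)^2) + ((y0-z0)^2+(y1-z1)^2)
      - 2*((x0-z0)*(y0-z0) + (x1-z1)*(y1-z1)) := by ring
  rw [idf, hx, hy]; linarith




lemma sqrt3_ub : Real.sqrt 3 ≤ 1.7320509 := by
  rw [show (1.7320509:ℝ) = Real.sqrt (1.7320509^2) from (Real.sqrt_sq (by norm_num)).symm]
  exact Real.sqrt_le_sqrt (by norm_num)

lemma sqrt3_lb : 1.7320508 ≤ Real.sqrt 3 := by
  rw [show (1.7320508:ℝ) = Real.sqrt (1.7320508^2) from (Real.sqrt_sq (by norm_num)).symm]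
  exact Real.sqrt_le_sqrt (by norm_num)

lemma sqrt3_pos : (0:ℝ) < Real.sqrt 3 := by linarith [sqrt3_lb]

lemma rho_lb : (1.1547:ℝ) ≤ 2 / Real.sqrt 3 := by
  rw [le_div_iff₀ sqrt3_pos]
  nlinarith [sqrt3_ub]

lemma rho_ub : 2 / Real.sqrt 3 ≤ 1.1548 := by
  rw [div_le_iff₀ sqrt3_pos]
  nlinarith [sqrt3_lb]

lemma rho_sq : (2 / Real.sqrt 3)^2 = 4/3 := by
  rw [div_pow, Real.sq_sqrt (by norm_num : (0:ℝ) ≤ 3)]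
  norm_num

lemma Ebound (β : ℝ) (hβl : -1 < β) (hβu : β < 1) :
    Real.sqrt (1 - (max (-1) (-(1/2) - β))^2) * Real.sqrt (1 - (min 1 (1/2 - β))^2)
      + (max (-1) (-(1/2) - β)) * (min 1 (1/2 - β)) ≤ 1/2 := by
  rcases le_or_gt β (-(1/2)) with h | h
  · -- t2 = 1
    have h2 : min 1 (1/2 - β) = 1 := min_eq_left (by linarith)
    have h1 : max (-1) (-(1/2) - β) = -(1/2) - β := max_eq_right (by linarith)
    rw [h1, h2]
    simp only [one_pow, sub_self, Real.sqrt_zero, mul_zero, zero_mul, mul_one]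
    linarith
  rcases le_or_gt (1/2) β with h' | h'
  · -- t1 = -1
    have h1 : max (-1) (-(1/2) - β) = -1 := max_eq_left (by linarith)
    have h2 : min 1 (1/2 - β) = 1/2 - β := min_eq_right (by linarith)
    rw [h1, h2]
    have : (1:ℝ) - (-1:ℝ)^2 = 0 := by norm_num
    rw [this, Real.sqrt_zero, zero_mul]
    linarith
  · have h1 : max (-1) (-(1/2) - β) = -(1/2) - β := max_eq_right (by linarith)
    have h2 : min 1 (1/2 - β) = 1/2 - β := min_eq_right (by linarith)
    rw [h1, h2]
    have ha : (0:ℝ) ≤ 1 - (-(1/2) - β)^2 := by nlinarith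
    have hb : (0:ℝ) ≤ 1 - (1/2 - β)^2 := by nlinarith
    have hprod : Real.sqrt (1 - (-(1/2) - β)^2) * Real.sqrt (1 - (1/2 - β)^2)
        = Real.sqrt ((1 - (-(1/2) - β)^2) * (1 - (1/2 - β)^2)) := (Real.sqrt_mul ha _).symm
    rw [hprod]
    have hval : (1 - (-(1/2) - β)^2) * (1 - (1/2 - β)^2) = (3/4 - β^2)^2 - β^2 := by ring
    have hle : Real.sqrt ((1 - (-(1/2) - β)^2) * (1 - (1/2 - β)^2)) ≤ 3/4 - β^2 := by
      rw [hval]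
      calc Real.sqrt ((3/4 - β^2)^2 - β^2) ≤ Real.sqrt ((3/4 - β^2)^2) :=
            Real.sqrt_le_sqrt (by nlinarith)
        _ = 3/4 - β^2 := Real.sqrt_sq (by nlinarith)
    nlinarith




lemma pt0 (x y : ℝ) : pt x y 0 = x := rfl
lemma pt1 (x y : ℝ) : pt x y 1 = y := rfl

lemma dist_sq (p q : E2) : dist p q ^ 2 = (p 0 - q 0)^2 + (p 1 - q 1)^2 := by
  rw [EuclideanSpace.dist_eq, Real.sq_sqrt (by positivity)]
  simp [Fin.sum_univ_two, Real.dist_eq, sq_abs]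

lemma le_dist_of_sq {p q : E2} {b : ℝ} (hb : 0 ≤ b)
    (h : b^2 ≤ (p 0 - q 0)^2 + (p 1 - q 1)^2) : b ≤ dist p q := by
  by_contra hlt
  push_neg at hlt
  have hd := dist_nonneg (x := p) (y := q)
  have h2 : dist p q ^2 < b^2 := by nlinarith
  nlinarith [dist_sq p q]

lemma dist_le_of_sq {p q : E2} {b : ℝ} (hb : 0 ≤ b)
    (h : (p 0 - q 0)^2 + (p 1 - q 1)^2 ≤ b^2) : dist p q ≤ b := by
  by_contra hlt
  push_neg at hlt
  have hd := dist_nonneg (x := p) (y := q)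
  have h2 : b^2 < dist p q ^2 := by nlinarith
  nlinarith [dist_sq p q]

lemma four_le_sq {p q : E2} (h : 2 ≤ dist p q) : 4 ≤ (p 0 - q 0)^2 + (p 1 - q 1)^2 := by
  have hd := dist_nonneg (x := p) (y := q)
  nlinarith [dist_sq p q]

lemma sq_lt_of_dist_lt {p q : E2} {b : ℝ} (h : dist p q < b) :
    (p 0 - q 0)^2 + (p 1 - q 1)^2 < b^2 := by
  have hd := dist_nonneg (x := p) (y := q)
  nlinarith [dist_sq p q]


lemma hole (ι : Type) (c : ι → E2)
    (hc : Pairwise fun i j => 2 ≤ dist (c i) (c j)) :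
    ∃ px py : ℝ, -1.1548 ≤ px ∧ px ≤ 1.1548 ∧ -0.5774 ≤ py ∧ py ≤ 0.5774 ∧
      ∀ i, 2 / Real.sqrt 3 ≤ dist (pt px py) (c i) := by
  classical
  have hρsq := rho_sq
  have hρlb := rho_lb
  have hρub := rho_ub
  have hρpos : (0:ℝ) < 2 / Real.sqrt 3 := by linarith
  by_cases h0 : ∀ i, 2 / Real.sqrt 3 ≤ dist (pt 0 0) (c i)
  · exact ⟨0, 0, by norm_num, by norm_num, by norm_num, by norm_num, h0⟩
  push_neg at h0
  obtain ⟨i0, hi0⟩ := h0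
  set ρ : ℝ := 2 / Real.sqrt 3 with hρdef
  set zx : ℝ := c i0 0 with hzx
  set zy : ℝ := c i0 1 with hzy
  have hzsq : zx^2 + zy^2 < 4/3 := by
    have h2 := sq_lt_of_dist_lt hi0
    rw [hρsq] at h2
    simpa [pt0, pt1] using h2
  have hzxb : -ρ < zx ∧ zx < ρ := by
    constructor <;> nlinarith only [hzsq, sq_nonneg zy, hρsq, hρpos]
  have hzyb : -ρ < zy ∧ zy < ρ := by
    constructor <;> nlinarith only [hzsq, sq_nonneg zx, hρsq, hρpos]
  set β : ℝ := zy / ρ with hβdef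
  have hzyβ : zy = ρ * β := by rw [hβdef, mul_div_assoc', eq_div_iff hρpos.ne', mul_comm]
  have hβu : β < 1 := (div_lt_one hρpos).mpr hzyb.2
  have hβl : -1 < β := by rw [hβdef, lt_div_iff₀ hρpos]; linarith [hzyb.1]
  set t1 : ℝ := max (-1) (-(1/2) - β) with ht1def
  set t2 : ℝ := min 1 (1/2 - β) with ht2def
  have ht1l : -1 ≤ t1 := le_max_left _ _
  have ht2u : t2 ≤ 1 := min_le_left _ _
  have ht12 : t1 ≤ t2 := by
    apply max_le
    · exact le_min (by norm_num) (by linarith)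
    · exact le_min (by linarith) (by linarith)
  have ht1u : t1 ≤ 1 := le_trans ht12 ht2u
  have ht2l : -1 ≤ t2 := le_trans ht1l ht12
  set σ : ℝ := if 0 ≤ zx then (-1:ℝ) else 1 with hσdef
  have hσ2 : σ^2 = 1 := by rw [hσdef]; split <;> norm_num
  have hσcase : (σ = -1 ∧ 0 ≤ zx) ∨ (σ = 1 ∧ zx < 0) := by
    rw [hσdef]; split
    · exact Or.inl ⟨rfl, by assumption⟩
    · exact Or.inr ⟨rfl, by linarith [not_le.mp (by assumption)]⟩
  set g : ℝ → ℝ := fun t => max (-1) (min 1 t) with hgdef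
  set fx : ℝ → ℝ := fun t => zx + σ * ρ * Real.sqrt (1 - (g t)^2) with hfxdef
  set fy : ℝ → ℝ := fun t => zy + ρ * (g t) with hfydef
  have hgb : ∀ t, -1 ≤ g t ∧ g t ≤ 1 := fun t =>
    ⟨le_max_left _ _, max_le (by norm_num) (min_le_left _ _)⟩
  have hgsq : ∀ t, Real.sqrt (1 - (g t)^2) ^ 2 = 1 - (g t)^2 := fun t =>
    Real.sq_sqrt (by nlinarith [(hgb t).1, (hgb t).2])
  have ht1ge : -(1/2) - β ≤ t1 := le_max_right _ _
  have ht2le : t2 ≤ 1/2 - β := min_le_right _ _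
  clear_value ρ zx zy β t1 t2 σ g fx fy
  have hDz : ∀ t : ℝ, (fx t - zx)^2 + (fy t - zy)^2 = 4/3 := by
    intro t
    have h1 : fx t - zx = σ * ρ * Real.sqrt (1 - (g t)^2) := by simp only [hfxdef]; ring
    have h2 : fy t - zy = ρ * g t := by simp only [hfydef]; ring
    rw [h1, h2]
    have hs := hgsq t
    linear_combination (ρ^2 * (Real.sqrt (1 - (g t)^2))^2) * hσ2 + ρ^2 * hs + hρsq
  have hIccg : ∀ t ∈ Set.Icc t1 t2, g t = t := by
    intro t ht
    have h1 : -1 ≤ t := le_trans ht1l ht.1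
    have h2 : t ≤ 1 := le_trans ht.2 ht2u
    simp only [hgdef]
    rw [min_eq_right h2, max_eq_right h1]
  have hcoords : ∀ t ∈ Set.Icc t1 t2,
      -1.1548 ≤ fx t ∧ fx t ≤ 1.1548 ∧ -0.5774 ≤ fy t ∧ fy t ≤ 0.5774 := by
    intro t ht
    have hgt := hIccg t ht
    have hs0 : 0 ≤ Real.sqrt (1 - (g t)^2) := Real.sqrt_nonneg _
    have hs1 : Real.sqrt (1 - (g t)^2) ≤ 1 :=
      Real.sqrt_le_one.mpr (by nlinarith only [sq_nonneg (g t)])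
    have hfxv : fx t = zx + σ * ρ * Real.sqrt (1 - (g t)^2) := by simp only [hfxdef]
    have hfyv : fy t = zy + ρ * (g t) := by simp only [hfydef]
    have htt1 : t1 ≤ t := ht.1
    have htt2 : t ≤ t2 := ht.2
    have htlow : -(1/2) - β ≤ t := le_trans ht1ge htt1
    have hthigh : t ≤ 1/2 - β := le_trans htt2 ht2le
    have hfy1 : fy t ≤ ρ/2 := by
      rw [hfyv, hgt]
      have h := mul_le_mul_of_nonneg_left hthigh hρpos.le
      have h' : ρ * (1/2 - β) = ρ/2 - ρ*β := by ring
      rw [h'] at h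
      linarith only [h, hzyβ]
    have hfy2 : -(ρ/2) ≤ fy t := by
      rw [hfyv, hgt]
      have h := mul_le_mul_of_nonneg_left htlow hρpos.le
      have h' : ρ * (-(1/2) - β) = -(ρ/2) - ρ*β := by ring
      rw [h'] at h
      linarith only [h, hzyβ]
    have hx1 : -ρ ≤ fx t ∧ fx t ≤ ρ := by
      rcases hσcase with ⟨hs, hzp⟩ | ⟨hs, hzn⟩
      · rw [hfxv, hs]
        constructor
        · have hA := mul_le_mul_of_nonneg_left hs1 hρpos.le
          linarith only [hA, hzp]
        · have hB := mul_nonneg hρpos.le hs0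
          linarith only [hB, hzxb.2]
      · rw [hfxv, hs]
        constructor
        · have hB := mul_nonneg hρpos.le hs0
          linarith only [hB, hzxb.1]
        · have hA := mul_le_mul_of_nonneg_left hs1 hρpos.le
          linarith only [hA, hzn]
    exact ⟨by linarith only [hx1.1, hρub], by linarith only [hx1.2, hρub],
      by linarith only [hfy2, hρub], by linarith only [hfy1, hρub]⟩
  by_cases hAll : ∃ t ∈ Set.Icc t1 t2, ∀ i, 4/3 ≤ (fx t - c i 0)^2 + (fy t - c i 1)^2
  · obtain ⟨t, ht, hgood⟩ := hAll
    obtain ⟨b1, b2, b3, b4⟩ := hcoords t ht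
    refine ⟨fx t, fy t, b1, b2, b3, b4, fun i => ?_⟩
    apply le_dist_of_sq hρpos.le
    rw [hρsq]
    simpa [pt0, pt1] using hgood i
  push_neg at hAll
  obtain ⟨i1, hi1⟩ := hAll t1 (Set.left_mem_Icc.mpr ht12)
  exfalso
  have hne10 : i1 ≠ i0 := by
    intro h
    rw [h] at hi1
    have := hDz t1
    rw [hzx, hzy] at this
    linarith only [this, hi1]
  set U : Set ℝ := {t | (fx t - c i1 0)^2 + (fy t - c i1 1)^2 < 4/3} with hUdef
  set V : Set ℝ := ⋃ (j : ι) (_ : j ≠ i1), {t | (fx t - c j 0)^2 + (fy t - c j 1)^2 < 4/3} with hVdef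
  have hgcont : Continuous g := by
    rw [hgdef]
    exact continuous_const.max (continuous_const.min continuous_id)
  have hfxcont : Continuous fx := by
    rw [hfxdef]
    apply continuous_const.add
    apply continuous_const.mul
    exact Real.continuous_sqrt.comp (continuous_const.sub (hgcont.pow 2))
  have hfycont : Continuous fy := by
    rw [hfydef]
    exact continuous_const.add (continuous_const.mul hgcont)
  have hDcont : ∀ j : ι, Continuous fun t => (fx t - c j 0)^2 + (fy t - c j 1)^2 := fun j =>
    ((hfxcont.sub continuous_const).pow 2).add ((hfycont.sub continuous_const).pow 2)
  have hUopen : IsOpen U := isOpen_lt (hDcont i1) continuous_const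
  have hVopen : IsOpen V :=
    isOpen_iUnion fun j => isOpen_iUnion fun _ => isOpen_lt (hDcont j) continuous_const
  have hdisj : Disjoint U V := by
    rw [Set.disjoint_left]
    rintro t htU htV
    simp only [hVdef, Set.mem_iUnion, Set.mem_setOf_eq] at htV
    simp only [hUdef, Set.mem_setOf_eq] at htU
    obtain ⟨j, hji1, htj⟩ := htV
    have hji0 : j ≠ i0 := by
      intro h
      rw [h] at htj
      have := hDz t
      rw [hzx, hzy] at this
      linarith only [this, htj]
    have hzq := hDz t
    rw [hzx, hzy] at hzq
    exact rigidity (fx t) (fy t) (c i0 0) (c i0 1) (c i1 0) (c i1 1) (c j 0) (c j 1)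
      (four_le_sq (hc hne10.symm)) (four_le_sq (hc (Ne.symm hji0)))
      (four_le_sq (hc (Ne.symm hji1))) (le_of_eq hzq) htU htj
  have hsub : Set.Icc t1 t2 ⊆ U ∪ V := by
    intro t ht
    obtain ⟨j, hj⟩ := hAll t ht
    by_cases hji : j = i1
    · left; rw [hji] at hj; exact hj
    · right; exact Set.mem_iUnion.mpr ⟨j, Set.mem_iUnion.mpr ⟨hji, hj⟩⟩
  have hne : (Set.Icc t1 t2 ∩ U).Nonempty :=
    ⟨t1, Set.left_mem_Icc.mpr ht12, by simp only [hUdef, Set.mem_setOf_eq]; exact hi1⟩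
  have hinU : Set.Icc t1 t2 ⊆ U :=
    (isPreconnected_Icc).subset_left_of_subset_union hUopen hVopen hdisj hsub hne
  have ht2U : (fx t2 - c i1 0)^2 + (fy t2 - c i1 1)^2 < 4/3 := by
    have := hinU (Set.right_mem_Icc.mpr ht12)
    simpa [hUdef, Set.mem_setOf_eq] using this
  -- chord upper bound
  have hz1 := hDz t1
  have hz2 := hDz t2
  rw [hzx, hzy] at hz1 hz2
  have hzw : 4 ≤ (c i1 0 - c i0 0)^2 + (c i1 1 - c i0 1)^2 := four_le_sq (hc hne10)
  have hch := chord (c i0 0) (c i0 1) (c i1 0) (c i1 1) (fx t1) (fy t1) (fx t2) (fy t2)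
    hz1 hz2 hzw hi1 ht2U
  -- chord lower bound
  have hgt1 : g t1 = t1 := hIccg t1 (Set.left_mem_Icc.mpr ht12)
  have hgt2 : g t2 = t2 := hIccg t2 (Set.right_mem_Icc.mpr ht12)
  have hEb := Ebound β hβl hβu
  rw [← ht1def, ← ht2def] at hEb
  have hs1sq : Real.sqrt (1 - t1^2) ^ 2 = 1 - t1^2 :=
    Real.sq_sqrt (by nlinarith only [ht1l, ht1u])
  have hs2sq : Real.sqrt (1 - t2^2) ^ 2 = 1 - t2^2 :=
    Real.sq_sqrt (by nlinarith only [ht2l, ht2u])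
  have hx12 : fx t1 - fx t2 = σ * ρ * (Real.sqrt (1 - t1^2) - Real.sqrt (1 - t2^2)) := by
    simp only [hfxdef]
    rw [hgt1, hgt2]
    ring
  have hy12 : fy t1 - fy t2 = ρ * (t1 - t2) := by
    simp only [hfydef]
    rw [hgt1, hgt2]
    ring
  have e1 : (σ * ρ * (Real.sqrt (1 - t1^2) - Real.sqrt (1 - t2^2)))^2
      = (4/3) * (Real.sqrt (1 - t1^2) - Real.sqrt (1 - t2^2))^2 := by
    linear_combination (ρ^2 * (Real.sqrt (1 - t1^2) - Real.sqrt (1 - t2^2))^2) * hσ2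
      + ((Real.sqrt (1 - t1^2) - Real.sqrt (1 - t2^2))^2) * hρsq
  have e2 : (ρ * (t1 - t2))^2 = (4/3) * (t1 - t2)^2 := by
    linear_combination ((t1 - t2)^2) * hρsq
  have hlow : 4/3 ≤ (fx t1 - fx t2)^2 + (fy t1 - fy t2)^2 := by
    rw [hx12, hy12, e1, e2]
    nlinarith only [hEb, hs1sq, hs2sq]
  linarith only [hch, hlow]




lemma pt_inj {a b x y : ℝ} (h : pt a b = pt x y) : a = x ∧ b = y := by
  constructor
  · have := congrArg (fun v : E2 => v 0) h; simpa [pt0, pt1] using this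
  · have := congrArg (fun v : E2 => v 1) h; simpa [pt0, pt1] using this

instance : DecidableEq E2 := Classical.decEq _

def Pjk (j k : ℕ) : E2 :=
  pt (-1.19 + 0.14 * ((j % 2 : ℕ) : ℝ) + 0.28 * (k : ℝ)) (-0.5225 + 0.209 * (j : ℝ))

def Xset : Finset E2 :=
  insert (pt 100 100) (((Finset.range 6) ×ˢ (Finset.range 9)).image fun jk => Pjk jk.1 jk.2)

lemma mem_X (j k : ℕ) (hj : j < 6) (hk : k < 9) : Pjk j k ∈ Xset :=
  Finset.mem_insert_of_mem (Finset.mem_image.mpr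
    ⟨(j,k), Finset.mem_product.mpr ⟨Finset.mem_range.mpr hj, Finset.mem_range.mpr hk⟩, rfl⟩)

lemma Xset_card : Xset.card = 55 := by
  rw [Xset, Finset.card_insert_of_notMem, Finset.card_image_of_injOn]
  · simp
  · rintro ⟨j, k⟩ hjk ⟨j', k'⟩ hjk' heq
    simp only [Finset.coe_product, Set.mem_prod, Finset.mem_coe, Finset.mem_range] at hjk hjk'
    obtain ⟨hx, hy⟩ := pt_inj heq
    have hj : j = j' := by
      have : (j:ℝ) = (j':ℝ) := by linarith
      exact_mod_cast this
    subst hj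
    have hk : k = k' := by
      have : (k:ℝ) = (k':ℝ) := by linarith
      exact_mod_cast this
    simp [hk]
  · simp only [Finset.mem_image, not_exists]
    rintro ⟨j, k⟩ ⟨hjk, heq⟩
    simp only [Finset.mem_product, Finset.mem_range] at hjk
    obtain ⟨hx, hy⟩ := pt_inj heq.symm
    have hj5 : (j:ℝ) ≤ 5 := by exact_mod_cast Nat.le_of_lt_succ hjk.1
    linarith

lemma box_half (u v : ℝ) (hu0 : 0 ≤ u) (hu : u ≤ 0.14) (hv0 : 0 ≤ v)
    (hL : 0.28*u + 0.418*v ≤ 0.063281) :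
    u^2 + v^2 ≤ 0.02380849 := by
  have h1 : 0 ≤ u * (0.14 - u) := mul_nonneg hu0 (by linarith)
  have h2 : 0 ≤ (0.063281 - 0.28*u) * (0.063281 - 0.28*u - 0.418*v) :=
    mul_nonneg (by linarith) (by linarith)
  have h3 : 0 ≤ v * (0.063281 - 0.28*u - 0.418*v) := mul_nonneg hv0 (by linarith)
  nlinarith [h1, h2, h3]

lemma box (u v : ℝ) (hu0 : 0 ≤ u) (hu : u ≤ 0.14) (hv0 : 0 ≤ v) (hv : v ≤ 0.209) :
    u^2 + v^2 ≤ 0.02380849 ∨ (0.14 - u)^2 + (0.209 - v)^2 ≤ 0.02380849 := by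
  rcases le_or_gt (0.28*u + 0.418*v) 0.063281 with h | h
  · exact Or.inl (box_half u v hu0 hu hv0 h)
  · exact Or.inr (box_half (0.14-u) (0.209-v) (by linarith) (by linarith) (by linarith)
      (by linarith))




lemma Pjk0 (j k : ℕ) : Pjk j k 0 = -1.19 + 0.14 * ((j % 2 : ℕ) : ℝ) + 0.28 * (k : ℝ) := rfl
lemma Pjk1 (j k : ℕ) : Pjk j k 1 = -0.5225 + 0.209 * (j : ℝ) := rfl

lemma cover (px py : ℝ) (hx1 : -1.1548 ≤ px) (hx2 : px ≤ 1.1548)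
    (hy1 : -0.5774 ≤ py) (hy2 : py ≤ 0.5774) :
    ∃ q ∈ Xset, (px - q 0)^2 + (py - q 1)^2 ≤ 0.02380849 := by
  have hq14 : (0:ℝ) < 0.14 := by norm_num
  have hq209 : (0:ℝ) < 0.209 := by norm_num
  set m : ℤ := ⌊(px + 1.19) / 0.14⌋ with hmdef
  have hfl1 : ((m:ℝ)) * 0.14 ≤ px + 1.19 := by
    have := Int.floor_le ((px + 1.19) / 0.14)
    rw [← hmdef] at this
    exact (le_div_iff₀ hq14).mp this
  have hfl2 : px + 1.19 < ((m:ℝ) + 1) * 0.14 := by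
    have := Int.lt_floor_add_one ((px + 1.19) / 0.14)
    rw [← hmdef] at this
    exact (div_lt_iff₀ hq14).mp this
  have hu0 : 0 ≤ px + 1.19 - 0.14*(m:ℝ) := by linarith
  have hu1 : px + 1.19 - 0.14*(m:ℝ) ≤ 0.14 := by linarith
  have hm0 : 0 ≤ m := by
    rw [hmdef]
    apply Int.le_floor.mpr
    push_cast
    rw [le_div_iff₀ hq14]
    linarith
  have hm16 : m ≤ 16 := by
    have h17 : (m:ℝ) < 17 := by nlinarith
    have : m < 17 := by exact_mod_cast h17
    omega
  set jI : ℤ := ⌊(py + 0.5225) / 0.209⌋ with hjdef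
  have hjl1 : ((jI:ℝ)) * 0.209 ≤ py + 0.5225 := by
    have := Int.floor_le ((py + 0.5225) / 0.209)
    rw [← hjdef] at this
    exact (le_div_iff₀ hq209).mp this
  have hjl2 : py + 0.5225 < ((jI:ℝ) + 1) * 0.209 := by
    have := Int.lt_floor_add_one ((py + 0.5225) / 0.209)
    rw [← hjdef] at this
    exact (div_lt_iff₀ hq209).mp this
  rcases le_or_gt jI (-1) with hjneg | hj0m
  · -- bottom outer band : jI ≤ -1, use row 0
    have hyb : py + 0.5225 < 0 := by
      have : ((jI:ℝ) + 1) ≤ 0 := by exact_mod_cast (by omega : jI + 1 ≤ 0)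
      nlinarith
    have hedge : (py + 0.5225)^2 ≤ 0.00301401 := by nlinarith
    rcases Int.even_or_odd m with ⟨n, hn⟩ | ⟨n, hn⟩
    · have hn0 : 0 ≤ n := by omega
      have hkNr : ((n.toNat:ℕ):ℝ) = (n:ℝ) := by
        exact_mod_cast congrArg (fun z : ℤ => (z:ℝ)) (Int.toNat_of_nonneg hn0)
      have hmr : (m:ℝ) = (n:ℝ) + (n:ℝ) := by rw [hn]; push_cast; ring
      refine ⟨Pjk 0 n.toNat, mem_X 0 n.toNat (by norm_num) (by omega), ?_⟩
      rw [Pjk0, Pjk1, hkNr]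
      norm_num
      nlinarith only [hu0, hu1, hedge, hmr]
    · have hn0 : 0 ≤ n := by omega
      have hkNr : (((n+1).toNat:ℕ):ℝ) = (n:ℝ) + 1 := by
        exact_mod_cast congrArg (fun z : ℤ => (z:ℝ)) (Int.toNat_of_nonneg (by omega : (0:ℤ) ≤ n + 1))
      have hmr : (m:ℝ) = 2*(n:ℝ) + 1 := by rw [hn]; push_cast; ring
      refine ⟨Pjk 0 (n+1).toNat, mem_X 0 (n+1).toNat (by norm_num) (by omega), ?_⟩
      rw [Pjk0, Pjk1, hkNr]
      norm_num
      nlinarith only [hu0, hu1, hedge, hmr]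
  rcases le_or_gt 5 jI with hjtop | hj4
  · -- top outer band : jI ≥ 5, use row 5
    have hyb : 0.5225 ≤ py := by
      have : (5:ℝ) ≤ (jI:ℝ) := by exact_mod_cast hjtop
      nlinarith
    have hedge : (py - 0.5225)^2 ≤ 0.00301401 := by nlinarith
    rcases Int.even_or_odd m with ⟨n, hn⟩ | ⟨n, hn⟩
    · have hn0 : 0 ≤ n := by omega
      have hkNr : ((n.toNat:ℕ):ℝ) = (n:ℝ) := by
        exact_mod_cast congrArg (fun z : ℤ => (z:ℝ)) (Int.toNat_of_nonneg hn0)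
      have hmr : (m:ℝ) = (n:ℝ) + (n:ℝ) := by rw [hn]; push_cast; ring
      refine ⟨Pjk 5 n.toNat, mem_X 5 n.toNat (by norm_num) (by omega), ?_⟩
      rw [Pjk0, Pjk1, hkNr]
      norm_num
      nlinarith only [hu0, hu1, hedge, hmr]
    · have hn0 : 0 ≤ n := by omega
      have hkNr : ((n.toNat:ℕ):ℝ) = (n:ℝ) := by
        exact_mod_cast congrArg (fun z : ℤ => (z:ℝ)) (Int.toNat_of_nonneg hn0)
      have hmr : (m:ℝ) = 2*(n:ℝ) + 1 := by rw [hn]; push_cast; ring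
      refine ⟨Pjk 5 n.toNat, mem_X 5 n.toNat (by norm_num) (by omega), ?_⟩
      rw [Pjk0, Pjk1, hkNr]
      norm_num
      nlinarith only [hu0, hu1, hedge, hmr]
  · -- inner bands : 0 ≤ jI ≤ 4
    have hjI0 : 0 ≤ jI := by omega
    have hjI4 : jI ≤ 4 := by omega
    have hjNr : ((jI.toNat:ℕ):ℝ) = (jI:ℝ) := by
      exact_mod_cast congrArg (fun z : ℤ => (z:ℝ)) (Int.toNat_of_nonneg hjI0)
    have hjNz : ((jI.toNat:ℕ):ℤ) = jI := Int.toNat_of_nonneg hjI0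
    have hv0 : 0 ≤ py + 0.5225 - 0.209*(jI:ℝ) := by linarith
    have hv1 : py + 0.5225 - 0.209*(jI:ℝ) ≤ 0.209 := by linarith
    rcases Int.even_or_odd m with ⟨n, hn⟩ | ⟨n, hn⟩
    · -- m even : m = n + n
      have hn0 : 0 ≤ n := by omega
      have hkNr : ((n.toNat:ℕ):ℝ) = (n:ℝ) := by
        exact_mod_cast congrArg (fun z : ℤ => (z:ℝ)) (Int.toNat_of_nonneg hn0)
      have hmr : (m:ℝ) = (n:ℝ) + (n:ℝ) := by rw [hn]; push_cast; ring
      have hU0 : 0 ≤ px + 1.19 - 0.28*(n:ℝ) := by linarith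
      have hU1 : px + 1.19 - 0.28*(n:ℝ) ≤ 0.14 := by linarith
      rcases Int.even_or_odd jI with ⟨a, ha⟩ | ⟨a, ha⟩
      · -- jI even : bottom row parity matches m even
        have hj2 : jI.toNat % 2 = 0 := by omega
        have hj21 : (jI.toNat + 1) % 2 = 1 := by omega
        rcases box (px + 1.19 - 0.28*(n:ℝ)) (py + 0.5225 - 0.209*(jI:ℝ)) hU0 hU1 hv0 hv1
          with hbx | hbx
        · refine ⟨Pjk jI.toNat n.toNat, mem_X _ _ (by omega) (by omega), ?_⟩
          rw [Pjk0, Pjk1, hkNr, hj2, hjNr]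
          norm_num
          nlinarith only [hbx]
        · refine ⟨Pjk (jI.toNat + 1) n.toNat, mem_X _ _ (by omega) (by omega), ?_⟩
          rw [Pjk0, Pjk1, hkNr, hj21]
          push_cast [hjNr]
          nlinarith only [hbx]
      · -- jI odd : bottom row offset 0.14, mirror in x
        have hj2 : jI.toNat % 2 = 1 := by omega
        have hj21 : (jI.toNat + 1) % 2 = 0 := by omega
        rcases box (0.14 - (px + 1.19 - 0.28*(n:ℝ))) (py + 0.5225 - 0.209*(jI:ℝ))
          (by linarith) (by linarith) hv0 hv1 with hbx | hbx
        · refine ⟨Pjk jI.toNat n.toNat, mem_X _ _ (by omega) (by omega), ?_⟩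
          rw [Pjk0, Pjk1, hkNr, hj2, hjNr]
          norm_num
          nlinarith only [hbx]
        · refine ⟨Pjk (jI.toNat + 1) n.toNat, mem_X _ _ (by omega) (by omega), ?_⟩
          rw [Pjk0, Pjk1, hkNr, hj21]
          push_cast [hjNr]
          nlinarith only [hbx]
    · -- m odd : m = 2n+1
      have hn0 : 0 ≤ n := by omega
      have hn7 : n ≤ 7 := by omega
      have hkNr : ((n.toNat:ℕ):ℝ) = (n:ℝ) := by
        exact_mod_cast congrArg (fun z : ℤ => (z:ℝ)) (Int.toNat_of_nonneg hn0)
      have hkNr1 : (((n+1).toNat:ℕ):ℝ) = (n:ℝ) + 1 := by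
        exact_mod_cast congrArg (fun z : ℤ => (z:ℝ)) (Int.toNat_of_nonneg (by omega : (0:ℤ) ≤ n + 1))
      have hmr : (m:ℝ) = 2*(n:ℝ) + 1 := by rw [hn]; push_cast; ring
      have hU0 : 0 ≤ px + 1.05 - 0.28*(n:ℝ) := by linarith
      have hU1 : px + 1.05 - 0.28*(n:ℝ) ≤ 0.14 := by linarith
      rcases Int.even_or_odd jI with ⟨a, ha⟩ | ⟨a, ha⟩
      · -- jI even : bottom row offset 0, x_m is odd cell : mirror
        have hj2 : jI.toNat % 2 = 0 := by omega
        have hj21 : (jI.toNat + 1) % 2 = 1 := by omega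
        rcases box (0.14 - (px + 1.05 - 0.28*(n:ℝ))) (py + 0.5225 - 0.209*(jI:ℝ))
          (by linarith) (by linarith) hv0 hv1 with hbx | hbx
        · refine ⟨Pjk jI.toNat (n+1).toNat, mem_X _ _ (by omega) (by omega), ?_⟩
          rw [Pjk0, Pjk1, hkNr1, hj2, hjNr]
          norm_num
          nlinarith only [hbx]
        · refine ⟨Pjk (jI.toNat + 1) n.toNat, mem_X _ _ (by omega) (by omega), ?_⟩
          rw [Pjk0, Pjk1, hkNr, hj21]
          push_cast [hjNr]
          nlinarith only [hbx]
      · -- jI odd : bottom row offset 0.14 matches odd cell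
        have hj2 : jI.toNat % 2 = 1 := by omega
        have hj21 : (jI.toNat + 1) % 2 = 0 := by omega
        rcases box (px + 1.05 - 0.28*(n:ℝ)) (py + 0.5225 - 0.209*(jI:ℝ)) hU0 hU1 hv0 hv1
          with hbx | hbx
        · refine ⟨Pjk jI.toNat n.toNat, mem_X _ _ (by omega) (by omega), ?_⟩
          rw [Pjk0, Pjk1, hkNr, hj2, hjNr]
          norm_num
          nlinarith only [hbx]
        · refine ⟨Pjk (jI.toNat + 1) (n+1).toNat, mem_X _ _ (by omega) (by omega), ?_⟩
          rw [Pjk0, Pjk1, hkNr1, hj21]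
          push_cast [hjNr]
          nlinarith only [hbx]


end C55

set_option maxHeartbeats 1000000 in
/-- There is a configuration of 55 points in the plane such that every packing of unit disks
(closed unit disks with pairwise disjoint interiors) leaves at least one of the points
uncovered. -/
theorem stmt_16 :
    ∃ X : Finset E2, X.card = 55 ∧
      ∀ (ι : Type) (c : ι → E2),
        (Pairwise fun i j => 2 ≤ dist (c i) (c j)) →
        ∃ p ∈ X, ∀ i, 1 < dist p (c i) := by
  classical
  refine ⟨C55.Xset, C55.Xset_card, ?_⟩
  intro ι c hc
  obtain ⟨px, py, h1, h2, h3, h4, hp⟩ := C55.hole ι c hc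
  obtain ⟨q, hqX, hq⟩ := C55.cover px py h1 h2 h3 h4
  refine ⟨q, hqX, fun i => ?_⟩
  have hpi := hp i
  have htri := dist_triangle (pt px py) q (c i)
  have hdq : dist (pt px py) q ≤ 0.1543 := by
    apply C55.dist_le_of_sq (by norm_num)
    rw [C55.pt0, C55.pt1]
    nlinarith only [hq]
  have hrho := C55.rho_lb
  linarith only [hpi, htri, hdq, hrho]
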